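/- Let ω₀ ∈ (0,1), s₁, s₂ ∈ (0,2) and θ ∈ ℝ with cos θ ≠ 1. Then every complex root λ of the characteristic polynomial p(λ) = λ³ + p₂λ² + p₁λ + p₀ of the MRT-LB scheme satisfies |λ| < 1. -/

import Mathlib

open Polynomial

/-- Auxiliary: Jury-type contradiction for a real root `x ≥ 1`. -/
lemma jury_aux (x σ q : ℝ) (hx : 1 ≤ x)
    (hA : 0 < (1 - x) * (1 - σ + q))
    (hD : 0 < (1 - q) * (1 - x * σ + x ^ 2 * q))
    (hE : x ^ 2 * q ^ 2 < 1) : False := by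
  have hx1 : 1 - x < 0 := by
    rcases lt_or_eq_of_le hx with h | h
    · linarith
    · rw [← h] at hA; simp at hA
  have hq : 1 - σ + q < 0 := by nlinarith
  rcases lt_trichotomy q 1 with h1 | h1 | h1
  · -- q < 1
    have hY : 0 < 1 - x * σ + x ^ 2 * q := by nlinarith
    have h2 : x + x * q < x * σ := by nlinarith
    have h3 : 1 < x * q := by nlinarith
    nlinarith [sq_nonneg (x * q - 1)]
  · rw [← h1] at hD; simp at hD
  · -- q > 1
    have h3 : 1 < x * q := by nlinarith
    nlinarith [sq_nonneg (x * q - 1)]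

/-- Jury criterion, real-root case. -/
lemma jury_real (x σ q : ℝ)
    (hA : 0 < (1 - x) * (1 - σ + q))
    (hB : 0 < (1 + x) * (1 + σ + q))
    (hD : 0 < (1 - q) * (1 - x * σ + x ^ 2 * q))
    (hE : x ^ 2 * q ^ 2 < 1) : x ^ 2 < 1 := by
  by_contra h
  push_neg at h
  rcases le_or_gt 1 x with hx | hx
  · exact jury_aux x σ q hx hA hD hE
  · have hx' : 1 ≤ -x := by nlinarith
    refine jury_aux (-x) (-σ) q hx' ?_ ?_ ?_
    · nlinarith
    · nlinarith
    · nlinarith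

theorem mrt_lb_roots_strictly_inside
    (ω₀ s₁ s₂ θ p₀ p₁ p₂ : ℝ)
    (hω₀ : ω₀ ∈ Set.Ioo (0 : ℝ) 1)
    (hs₁ : s₁ ∈ Set.Ioo (0 : ℝ) 2)
    (hs₂ : s₂ ∈ Set.Ioo (0 : ℝ) 2)
    (hθ : Real.cos θ ≠ 1)
    (hp₀ : p₀ = (s₁ - 1) * (1 - s₂))
    (hp₁ : p₁ = (s₁ - 1) * (s₂ * ω₀ - 1)
      + ((s₁ - 2) * (s₂ - 1) + s₂ * ω₀ * (1 - s₁)) * Real.cos θ)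
    (hp₂ : p₂ = s₂ - s₂ * ω₀ - 1 + (s₂ * ω₀ + s₁ - 2) * Real.cos θ) :
    ∀ lam : ℂ,
      (X ^ 3 + C (p₂ : ℂ) * X ^ 2 + C (p₁ : ℂ) * X + C (p₀ : ℂ)).IsRoot lam →
      ‖lam‖ < 1 := by
  obtain ⟨hω0, hω1⟩ := hω₀
  obtain ⟨hs10, hs12⟩ := hs₁
  obtain ⟨hs20, hs22⟩ := hs₂
  have hc1 : Real.cos θ < 1 := lt_of_le_of_ne (Real.cos_le_one θ) hθ
  have hcm1 : -1 ≤ Real.cos θ := Real.neg_one_le_cos θ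
  set c : ℝ := Real.cos θ with hc
  -- the four Jury conditions
  have hC2 : 0 < 1 + p₂ + p₁ + p₀ := by
    have e : 1 + p₂ + p₁ + p₀ = s₂ * (2 - s₁) * (1 - ω₀) * (1 - c) := by
      rw [hp₀, hp₁, hp₂]; ring
    rw [e]
    have := mul_pos (mul_pos (mul_pos hs20 (by linarith : (0:ℝ) < 2 - s₁))
      (by linarith : (0:ℝ) < 1 - ω₀)) (by linarith : (0:ℝ) < 1 - c)
    linarith
  have hC3 : 0 < 1 - p₂ + p₁ - p₀ := by
    have e : 1 - p₂ + p₁ - p₀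
        = (1 - c) * (s₁ * s₂ * ω₀) + (1 + c) * ((2 - s₁) * (2 - s₂)) := by
      rw [hp₀, hp₁, hp₂]; ring
    rw [e]
    have h1 : 0 < (1 - c) * (s₁ * s₂ * ω₀) := by
      apply mul_pos (by linarith)
      exact mul_pos (mul_pos hs10 hs20) hω0
    have h2 : 0 ≤ (1 + c) * ((2 - s₁) * (2 - s₂)) := by
      apply mul_nonneg (by linarith)
      exact le_of_lt (mul_pos (by linarith) (by linarith))
    linarith
  have hP1 : (1 - s₁) * (1 - s₂) < 1 := by nlinarith [sq_nonneg (s₁ - s₂)]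
  have hP2 : -1 < (1 - s₁) * (1 - s₂) := by nlinarith [sq_nonneg (s₁ + s₂ - 2)]
  have hC1 : p₀ ^ 2 < 1 := by rw [hp₀]; nlinarith
  have hC4 : 0 < 1 - p₁ + p₀ * p₂ - p₀ ^ 2 := by
    have e : 1 - p₁ + p₀ * p₂ - p₀ ^ 2
        = (1 - c) / 2 * ((1 - ω₀) * (s₁ * (2 - s₂) * (1 + (1 - s₁) * (1 - s₂)))
            + ω₀ * ((2 - s₁) * (2 - s₂) * (1 - (1 - s₁) * (1 - s₂))))
          + (1 + c) / 2 * (s₁ * s₂ * (1 - (1 - s₁) * (1 - s₂))) := by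
      rw [hp₀, hp₁, hp₂]; ring
    rw [e]
    have t1 : 0 < s₁ * (2 - s₂) * (1 + (1 - s₁) * (1 - s₂)) :=
      mul_pos (mul_pos hs10 (by linarith)) (by linarith)
    have t2 : 0 < (2 - s₁) * (2 - s₂) * (1 - (1 - s₁) * (1 - s₂)) :=
      mul_pos (mul_pos (by linarith) (by linarith)) (by linarith)
    have t3 : 0 < s₁ * s₂ * (1 - (1 - s₁) * (1 - s₂)) :=
      mul_pos (mul_pos hs10 hs20) (by linarith)
    have h1 : 0 < (1 - c) / 2 * ((1 - ω₀) * (s₁ * (2 - s₂) * (1 + (1 - s₁) * (1 - s₂)))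
        + ω₀ * ((2 - s₁) * (2 - s₂) * (1 - (1 - s₁) * (1 - s₂)))) := by
      apply mul_pos (by linarith)
      have := mul_pos (by linarith : (0:ℝ) < 1 - ω₀) t1
      have := mul_pos hω0 t2
      linarith
    have h2 : 0 ≤ (1 + c) / 2 * (s₁ * s₂ * (1 - (1 - s₁) * (1 - s₂))) := by
      apply mul_nonneg (by linarith) (le_of_lt t3)
    linarith
  clear hp₀ hp₁ hp₂ hc1 hcm1 hθ hc hP1 hP2
  intro lam hroot
  have hlam : lam ^ 3 + (p₂ : ℂ) * lam ^ 2 + (p₁ : ℂ) * lam + (p₀ : ℂ) = 0 := by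
    simpa [Polynomial.IsRoot] using hroot
  set x : ℝ := lam.re with hxdef
  set y : ℝ := lam.im with hydef
  have hlxy : lam = (x : ℂ) + (y : ℂ) * Complex.I := (Complex.re_add_im lam).symm
  rw [hlxy] at hlam
  have hre : x ^ 3 - 3 * x * y ^ 2 + p₂ * (x ^ 2 - y ^ 2) + p₁ * x + p₀ = 0 := by
    have := congrArg Complex.re hlam
    simp [Complex.add_re, Complex.mul_re, Complex.mul_im, pow_succ, pow_zero,
      Complex.add_im] at this
    linarith [this]
  have him : 3 * x ^ 2 * y - y ^ 3 + 2 * p₂ * x * y + p₁ * y = 0 := by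
    have := congrArg Complex.im hlam
    simp [Complex.add_re, Complex.mul_re, Complex.mul_im, pow_succ, pow_zero,
      Complex.add_im] at this
    linarith [this]
  -- conclude from normSq < 1
  suffices hns : x ^ 2 + y ^ 2 < 1 by
    have habs : ‖lam‖ ^ 2 < 1 := by
      rw [Complex.sq_norm, Complex.normSq_apply]
      nlinarith
    nlinarith [norm_nonneg lam]
  by_cases hy : y = 0
  · -- real root
    rw [hy] at hre ⊢
    have hre0 : x ^ 3 + p₂ * x ^ 2 + p₁ * x + p₀ = 0 := by linear_combination hre
    have e1 : (1 - x) * (1 - (-p₂ - x) + (p₁ + p₂ * x + x ^ 2)) = 1 + p₂ + p₁ + p₀ := by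
      linear_combination -hre0
    have e2 : (1 + x) * (1 + (-p₂ - x) + (p₁ + p₂ * x + x ^ 2)) = 1 - p₂ + p₁ - p₀ := by
      linear_combination hre0
    have e3 : (1 - (p₁ + p₂ * x + x ^ 2)) * (1 - x * (-p₂ - x) + x ^ 2 * (p₁ + p₂ * x + x ^ 2))
        = 1 - p₁ + p₀ * p₂ - p₀ ^ 2 := by
      linear_combination (p₀ - p₂ - x ^ 3 - p₂ * x ^ 2 - p₁ * x) * hre0
    have e4 : x ^ 2 * (p₁ + p₂ * x + x ^ 2) ^ 2 = p₀ ^ 2 := by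
      linear_combination (x * (p₁ + p₂ * x + x ^ 2) - p₀) * hre0
    have := jury_real x (-p₂ - x) (p₁ + p₂ * x + x ^ 2)
      (by rw [e1]; exact hC2) (by rw [e2]; exact hC3) (by rw [e3]; exact hC4)
      (by rw [e4]; exact hC1)
    nlinarith
  · -- nonreal root
    have hQ' : 3 * x ^ 2 - y ^ 2 + 2 * p₂ * x + p₁ = 0 := by
      have h : y * (3 * x ^ 2 - y ^ 2 + 2 * p₂ * x + p₁) = 0 := by linear_combination him
      rcases mul_eq_zero.mp h with h | h
      · exact absurd h hy
      · exact h
    have hp1' : p₁ = y ^ 2 - 3 * x ^ 2 - 2 * p₂ * x := by linear_combination hQ'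
    have hp0' : p₀ = (x ^ 2 + y ^ 2) * (p₂ + 2 * x) := by
      linear_combination hre - x * hQ'
    have key : 1 - p₁ + p₀ * p₂ - p₀ ^ 2
        = (1 - (x ^ 2 + y ^ 2)) * ((1 + p₂ * x + 2 * x ^ 2) ^ 2 + (y * (p₂ + 2 * x)) ^ 2) := by
      linear_combination (p₂ - p₀ - (x ^ 2 + y ^ 2) * (p₂ + 2 * x)) * hp0' - hp1'
    rw [key] at hC4
    by_contra hr
    push_neg at hr
    have hr1 : (0:ℝ) ≤ x ^ 2 + y ^ 2 - 1 := by linarith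
    have h1 := mul_nonneg hr1 (sq_nonneg (1 + p₂ * x + 2 * x ^ 2))
    have h2 := mul_nonneg hr1 (sq_nonneg (y * (p₂ + 2 * x)))
    linarith [hC4, h1, h2]
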